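/- The discounted, budget-truncated aggregation of level-wise similarities is itself a similarity value: under the stated hypotheses, 0 ≤ Sim ≤ 1. -/
import Mathlib


open Finset

/-!
STATEMENT 6 (the discounted, budget-truncated aggregation of level-wise
similarities is itself a similarity value).
For level-wise similarities `s 0, …, s n ∈ [0,1]` and discount `σ ∈ [0,1]`, the
overall similarity is
`Sim = ∑_{l=0}^{n} max (1 - ∑_{l'=0}^{l-1} s l') 0 * s l * σ^l`.
Claim: `0 ≤ Sim ≤ 1`.
-/
theorem overall_similarity_bounds (n : ℕ) (s : ℕ → ℝ) (σ : ℝ)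
    (hs : ∀ l ≤ n, 0 ≤ s l ∧ s l ≤ 1) (hσ0 : 0 ≤ σ) (hσ1 : σ ≤ 1)
    (Sim : ℝ)
    (hSim : Sim = ∑ l ∈ range (n + 1),
      max (1 - ∑ l' ∈ range l, s l') 0 * s l * σ ^ l) :
    0 ≤ Sim ∧ Sim ≤ 1 := by
  set f : ℕ → ℝ := fun l => max (1 - ∑ l' ∈ range l, s l') 0 with hf
  constructor
  · rw [hSim]
    apply Finset.sum_nonneg
    intro l hl
    have hln : l ≤ n := Nat.lt_succ_iff.mp (mem_range.mp hl)
    exact mul_nonneg (mul_nonneg (le_max_right _ _) (hs l hln).1)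
      (pow_nonneg hσ0 l)
  · rw [hSim]
    have key : ∀ l ∈ range (n + 1),
        max (1 - ∑ l' ∈ range l, s l') 0 * s l * σ ^ l ≤ f l - f (l + 1) := by
      intro l hl
      have hln : l ≤ n := Nat.lt_succ_iff.mp (mem_range.mp hl)
      obtain ⟨h0, h1⟩ := hs l hln
      have hS : 0 ≤ ∑ l' ∈ range l, s l' :=
        Finset.sum_nonneg fun i hi =>
          (hs i (le_trans (le_of_lt (mem_range.mp hi)) hln)).1
      have hpow : σ ^ l ≤ 1 := pow_le_one₀ hσ0 hσ1
      have hstep : max (1 - ∑ l' ∈ range l, s l') 0 * s l ≤ f l - f (l + 1) := by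
        simp only [hf, Finset.sum_range_succ]
        rcases le_or_gt (1 - ∑ l' ∈ range l, s l') 0 with h | h
        · rw [max_eq_right h, zero_mul]
          have h' : 1 - (∑ l' ∈ range l, s l' + s l) ≤ 0 := by linarith
          rw [max_eq_right h']
          norm_num
        · rw [max_eq_left h.le]
          rcases le_or_gt (1 - (∑ l' ∈ range l, s l' + s l)) 0 with h2 | h2
          · rw [max_eq_right h2]
            nlinarith
          · rw [max_eq_left h2.le]
            nlinarith
      calc max (1 - ∑ l' ∈ range l, s l') 0 * s l * σ ^ l
          ≤ max (1 - ∑ l' ∈ range l, s l') 0 * s l * 1 := by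
            apply mul_le_mul_of_nonneg_left hpow
            exact mul_nonneg (le_max_right _ _) h0
        _ = max (1 - ∑ l' ∈ range l, s l') 0 * s l := by ring
        _ ≤ f l - f (l + 1) := hstep
    calc (∑ l ∈ range (n + 1), max (1 - ∑ l' ∈ range l, s l') 0 * s l * σ ^ l)
        ≤ ∑ l ∈ range (n + 1), (f l - f (l + 1)) := Finset.sum_le_sum key
      _ = f 0 - f (n + 1) := Finset.sum_range_sub' f (n + 1)
      _ ≤ 1 := by
          have : 0 ≤ f (n + 1) := le_max_right _ _
          simp only [hf, Finset.range_zero, Finset.sum_empty, sub_zero]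
          rw [max_eq_left (by norm_num : (0:ℝ) ≤ 1)] at *
          linarith
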